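/- Let C be a free cyclic code of odd length n over R = Z4[u]/(u^2) with idempotent generator e(x) in R[x]/(x^n - 1). Then 1 - e(x^{-1}) (i.e., the idempotent obtained by substituting x^{n-1} for x and subtracting from 1) is an idempotent generator of the dual code C^⊥. -/

import Mathlib

set_option maxSynthPendingDepth 3
set_option synthInstance.maxHeartbeats 400000

open DualNumber TrivSqZeroExt Polynomial

/-- The ring `R = ℤ₄[u]/(u²)`, realized as dual numbers over `ℤ₄`. -/
abbrev R4 := DualNumber (ZMod 4)

/-- The polynomial `c₀ + c₁ x + ⋯ + c_{n-1} x^{n-1}` of a word `c ∈ Rⁿ`. -/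
noncomputable def toPoly {n : ℕ} (c : Fin n → R4) : Polynomial R4 :=
  ∑ i : Fin n, C (c i) * X ^ (i : ℕ)

/-- The set of words of length `n` whose polynomial lies in the ideal `I` of
`R[x]/(xⁿ-1)`. -/
def codeOfIdeal {n : ℕ}
    (I : Ideal (Polynomial R4 ⧸ Ideal.span {(X : Polynomial R4) ^ n - 1})) :
    Set (Fin n → R4) :=
  {c | Ideal.Quotient.mk (Ideal.span {(X : Polynomial R4) ^ n - 1}) (toPoly c) ∈ I}

/-- The dual of a code under the Euclidean inner product on `Rⁿ`. -/
def dualCode {n : ℕ} (S : Set (Fin n → R4)) : Set (Fin n → R4) :=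
  {y | ∀ c ∈ S, ∑ i : Fin n, c i * y i = 0}

set_option linter.unusedSectionVars false
set_option maxHeartbeats 1000000

instance : Nontrivial (DualNumber (ZMod 4)) := ⟨⟨0, 1, fun h => by
  have h2 : (0 : ZMod 4) = 1 := by simpa using congrArg TrivSqZeroExt.fst h
  exact absurd h2 (by decide)⟩⟩

namespace St19

noncomputable section

variable (n : ℕ) [NeZero n]

abbrev qk : Polynomial R4 →+* (Polynomial R4 ⧸ Ideal.span {(X : Polynomial R4) ^ n - 1}) :=
  Ideal.Quotient.mk (Ideal.span {(X : Polynomial R4) ^ n - 1})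

lemma hg : ((X : Polynomial R4) ^ n - 1).Monic := by
  simpa using Polynomial.monic_X_pow_sub_C (1 : R4) (NeZero.ne n)

lemma hgdeg : ((X : Polynomial R4) ^ n - 1).natDegree = n := by
  simpa using Polynomial.natDegree_X_pow_sub_C (n := n) (r := (1 : R4))

def t : Polynomial R4 ⧸ Ideal.span {(X : Polynomial R4) ^ n - 1} := qk n X

lemma ht : (t n) ^ n = 1 := by
  have h : qk n ((X : Polynomial R4) ^ n - 1) = 0 := by
    rw [Ideal.Quotient.eq_zero_iff_mem]; exact Ideal.subset_span rfl
  rw [map_sub, map_pow, map_one, sub_eq_zero] at h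
  exact h

lemma tpow (m : ℕ) : (t n) ^ m = (t n) ^ (m % n) := by
  conv_lhs => rw [← Nat.div_add_mod m n]
  rw [pow_add, pow_mul, ht, one_pow, one_mul]

lemma qk_eval (p : Polynomial R4) : qk n p = eval₂ ((qk n).comp C) (t n) p := by
  conv_lhs => rw [← Polynomial.eval₂_C_X (p := p)]
  exact Polynomial.hom_eval₂ p C (qk n) X

lemma qk_comp (p s : Polynomial R4) :
    qk n (p.comp s) = eval₂ ((qk n).comp C) (qk n s) p := by
  have hc : p.comp s = eval₂ C s p := rfl
  rw [hc]
  exact Polynomial.hom_eval₂ p C (qk n) s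

/-- The involution `x ↦ x^{n-1}` on `R[x]/(xⁿ-1)`. -/
def sig : (Polynomial R4 ⧸ Ideal.span {(X : Polynomial R4) ^ n - 1}) →+*
    (Polynomial R4 ⧸ Ideal.span {(X : Polynomial R4) ^ n - 1}) :=
  Ideal.Quotient.lift _ ((qk n).comp (aeval ((X : Polynomial R4) ^ (n - 1))).toRingHom) (by
    intro a ha
    rw [Ideal.mem_span_singleton] at ha
    obtain ⟨r, rfl⟩ := ha
    simp only [RingHom.comp_apply, AlgHom.toRingHom_eq_coe, RingHom.coe_coe, map_mul]
    have h1 : (aeval ((X : Polynomial R4) ^ (n - 1))) ((X : Polynomial R4) ^ n - 1)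
        = (X : Polynomial R4) ^ ((n - 1) * n) - 1 := by
      simp [pow_mul]
    have h2 : qk n ((X : Polynomial R4) ^ ((n - 1) * n) - 1) = 0 := by
      rw [map_sub, map_pow, map_one, sub_eq_zero]
      show (t n) ^ ((n - 1) * n) = 1
      rw [mul_comm, pow_mul, ht, one_pow]
    rw [h1, h2, zero_mul])

lemma sig_mk (p : Polynomial R4) :
    sig n (qk n p) = qk n (p.comp ((X : Polynomial R4) ^ (n - 1))) := by
  rw [sig, Ideal.Quotient.lift_mk]
  simp only [RingHom.comp_apply, AlgHom.toRingHom_eq_coe, RingHom.coe_coe]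
  rfl

lemma sq_pred_mod : ((n - 1) * (n - 1)) % n = 1 % n := by
  obtain ⟨k, rfl⟩ : ∃ k, n = k + 1 :=
    ⟨n - 1, (Nat.succ_pred_eq_of_pos (Nat.pos_of_ne_zero (NeZero.ne n))).symm⟩
  cases k with
  | zero => simp
  | succ m =>
    have h : (m + 1 + 1 - 1) * (m + 1 + 1 - 1) = 1 + (m + 1 + 1) * m := by
      simp only [Nat.add_sub_cancel]; ring
    rw [h, Nat.add_mul_mod_self_left]

lemma t_sq_pred : (t n) ^ ((n - 1) * (n - 1)) = t n := by
  rw [tpow, sq_pred_mod, ← tpow, pow_one]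

lemma sig_sig (p : Polynomial R4) : sig n (sig n (qk n p)) = qk n p := by
  rw [sig_mk, sig_mk, Polynomial.comp_assoc]
  have hs : ((X : Polynomial R4) ^ (n - 1)).comp ((X : Polynomial R4) ^ (n - 1))
      = (X : Polynomial R4) ^ ((n - 1) * (n - 1)) := by
    rw [Polynomial.pow_comp, Polynomial.X_comp, ← pow_mul]
  rw [hs, qk_comp, qk_eval n p, map_pow]
  congr 1
  exact t_sq_pred n

lemma halg (a : R4) :
    qk n (C a) = algebraMap R4 (Polynomial R4 ⧸ Ideal.span {(X : Polynomial R4) ^ n - 1}) a := rfl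

lemma hsmul (a : R4) (z : Polynomial R4 ⧸ Ideal.span {(X : Polynomial R4) ^ n - 1}) :
    qk n (C a) * z = a • z := by
  exact (Algebra.smul_def a z).symm

lemma sig_C (a : R4) : sig n (qk n (C a)) = qk n (C a) := by
  rw [sig_mk, Polynomial.C_comp]

lemma sig_t : sig n (t n) = (t n) ^ (n - 1) := by
  rw [t, sig_mk, Polynomial.X_comp, map_pow]

lemma sig_smul (a : R4) (z : Polynomial R4 ⧸ Ideal.span {(X : Polynomial R4) ^ n - 1}) :
    sig n (a • z) = a • sig n z := by
  rw [← hsmul, map_mul, sig_C, hsmul]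

lemma qk_toPoly (c : Fin n → R4) :
    qk n (toPoly c) = ∑ i : Fin n, (c i) • (t n) ^ (i : ℕ) := by
  rw [toPoly, map_sum]
  refine Finset.sum_congr rfl fun i _ => ?_
  rw [map_mul, map_pow, hsmul]
  rfl

lemma sig_qk_toPoly (y : Fin n → R4) :
    sig n (qk n (toPoly y)) = ∑ j : Fin n, (y j) • (t n) ^ ((n - 1) * (j : ℕ)) := by
  rw [qk_toPoly, map_sum]
  refine Finset.sum_congr rfl fun j _ => ?_
  rw [sig_smul, map_pow, sig_t, ← pow_mul]

/-- Power basis of the quotient. -/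
def B : Module.Basis (Fin n) R4 (Polynomial R4 ⧸ Ideal.span {(X : Polynomial R4) ^ n - 1}) :=
  (AdjoinRoot.powerBasis' (hg n)).basis.reindex
    (finCongr (by rw [AdjoinRoot.powerBasis'_dim, hgdeg]))

lemma hB (i : Fin n) : B n i = (t n) ^ (i : ℕ) := by
  rw [B]
  erw [Module.Basis.reindex_apply, PowerBasis.coe_basis]
  rw [AdjoinRoot.powerBasis'_gen]
  congr 1

/-- Constant-coefficient functional. -/
def tau : (Polynomial R4 ⧸ Ideal.span {(X : Polynomial R4) ^ n - 1}) →ₗ[R4] R4 :=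
  (B n).coord 0

lemma tau_tpow (m : ℕ) : tau n ((t n) ^ m) = if m % n = 0 then 1 else 0 := by
  rw [tpow]
  have hlt : m % n < n := Nat.mod_lt _ (Nat.pos_of_ne_zero (NeZero.ne n))
  rw [← hB n ⟨m % n, hlt⟩, tau, Module.Basis.coord_apply, Module.Basis.repr_self, Finsupp.single_apply]
  by_cases h : m % n = 0 <;> simp [h, Fin.ext_iff]

lemma mod_iff (i j : Fin n) : ((i : ℕ) + (n - 1) * (j : ℕ)) % n = 0 ↔ j = i := by
  obtain ⟨k, rfl⟩ : ∃ k, n = k + 1 :=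
    ⟨n - 1, (Nat.succ_pred_eq_of_pos (Nat.pos_of_ne_zero (NeZero.ne n))).symm⟩
  simp only [Nat.add_sub_cancel]
  constructor
  · intro h
    have h1 : ((i : ℕ) + k * (j : ℕ) + (j : ℕ)) % (k + 1) = (j : ℕ) % (k + 1) := by
      rw [Nat.add_mod, h, Nat.zero_add, Nat.mod_mod_of_dvd _ dvd_rfl]
    have h2 : (i : ℕ) + k * (j : ℕ) + (j : ℕ) = (i : ℕ) + (j : ℕ) * (k + 1) := by ring
    rw [h2, Nat.add_mul_mod_self_right] at h1
    exact Fin.ext (by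
      rw [Nat.mod_eq_of_lt i.isLt, Nat.mod_eq_of_lt j.isLt] at h1
      exact h1.symm)
  · rintro rfl
    have h2 : (j : ℕ) + k * (j : ℕ) = (j : ℕ) * (k + 1) := by ring
    rw [h2, Nat.mul_mod_left]

lemma zero_mod_iff (j₀ j : Fin n) : ((n - (j₀ : ℕ)) + (j : ℕ)) % n = 0 ↔ j = j₀ := by
  constructor
  · intro h
    have hle : (j₀ : ℕ) ≤ n := le_of_lt j₀.isLt
    have h1 : ((n - (j₀ : ℕ)) + (j : ℕ) + (j₀ : ℕ)) % n = (j₀ : ℕ) % n := by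
      rw [Nat.add_mod, h, Nat.zero_add, Nat.mod_mod_of_dvd _ dvd_rfl]
    have h2 : (n - (j₀ : ℕ)) + (j : ℕ) + (j₀ : ℕ) = (j : ℕ) + n := by omega
    rw [h2, Nat.add_mod_right] at h1
    exact Fin.ext (by rw [Nat.mod_eq_of_lt j.isLt, Nat.mod_eq_of_lt j₀.isLt] at h1; exact h1)
  · rintro rfl
    have h2 : (n - (j : ℕ)) + (j : ℕ) = n := by omega
    rw [h2, Nat.mod_self]

lemma eq_zero_of_tau (z : Polynomial R4 ⧸ Ideal.span {(X : Polynomial R4) ^ n - 1})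
    (h : ∀ k, tau n ((t n) ^ k * z) = 0) : z = 0 := by
  have hrep := (B n).sum_repr z
  have hcoord : ∀ j₀ : Fin n, (B n).repr z j₀ = 0 := by
    intro j₀
    have key : tau n ((t n) ^ (n - (j₀ : ℕ)) * z) = (B n).repr z j₀ := by
      conv_lhs => rw [← hrep]
      rw [Finset.mul_sum, map_sum]
      have hterm : ∀ j : Fin n,
          tau n ((t n) ^ (n - (j₀ : ℕ)) * ((B n).repr z j • B n j))
            = if j = j₀ then (B n).repr z j else 0 := by
        intro j
        rw [hB, mul_smul_comm, ← pow_add, map_smul, smul_eq_mul, tau_tpow]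
        by_cases hj : j = j₀
        · rw [if_pos ((zero_mod_iff n j₀ j).mpr hj), if_pos hj, mul_one]
        · rw [if_neg (fun hc => hj ((zero_mod_iff n j₀ j).mp hc)), if_neg hj, mul_zero]
      rw [Finset.sum_congr rfl fun j _ => hterm j, Finset.sum_ite_eq' Finset.univ j₀]
      simp
    rw [h _] at key
    exact key.symm
  calc z = ∑ j : Fin n, (B n).repr z j • B n j := hrep.symm
    _ = 0 := Finset.sum_eq_zero fun j _ => by rw [hcoord]; simp

lemma tau_pair (c y : Fin n → R4) :
    tau n (qk n (toPoly c) * sig n (qk n (toPoly y))) = ∑ i : Fin n, c i * y i := by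
  rw [qk_toPoly, sig_qk_toPoly, Finset.sum_mul_sum, map_sum]
  refine Finset.sum_congr rfl fun i _ => ?_
  rw [map_sum]
  have hterm : ∀ j : Fin n,
      tau n ((c i • (t n) ^ (i : ℕ)) * (y j • (t n) ^ ((n - 1) * (j : ℕ))))
        = if j = i then c i * y j else 0 := by
    intro j
    rw [smul_mul_smul_comm, ← pow_add, map_smul, smul_eq_mul, tau_tpow]
    by_cases hj : j = i
    · rw [if_pos ((mod_iff n i j).mpr hj), if_pos hj, mul_one]
    · rw [if_neg (fun hc => hj ((mod_iff n i j).mp hc)), if_neg hj, mul_zero]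
  rw [Finset.sum_congr rfl fun j _ => hterm j, Finset.sum_ite_eq' Finset.univ i]
  simp

lemma mem_span_idem {a p : Polynomial R4 ⧸ Ideal.span {(X : Polynomial R4) ^ n - 1}}
    (ha : a * a = a) : p ∈ Ideal.span {a} ↔ a * p = p := by
  rw [Ideal.mem_span_singleton]
  constructor
  · rintro ⟨r, rfl⟩; rw [← mul_assoc, ha]
  · intro h; exact ⟨p, h.symm⟩

lemma exists_word (z : Polynomial R4 ⧸ Ideal.span {(X : Polynomial R4) ^ n - 1}) :
    ∃ c : Fin n → R4, qk n (toPoly c) = z := by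
  obtain ⟨p, rfl⟩ := Ideal.Quotient.mk_surjective z
  set g : Polynomial R4 := (X : Polynomial R4) ^ n - 1 with hgdef
  set r := p %ₘ g with hrdef
  have hne1 : g ≠ 1 := fun hc => by
    have := hgdeg n
    rw [← hgdef, hc] at this
    simp at this
    exact NeZero.ne n this.symm
  have hdeg : r.natDegree < n := by
    have := Polynomial.natDegree_modByMonic_lt p (hg n) hne1
    rwa [hgdeg n] at this
  refine ⟨fun i => r.coeff i, ?_⟩
  have hrtoPoly : toPoly (fun i : Fin n => r.coeff i) = r := by
    rw [toPoly]
    conv_rhs => rw [Polynomial.as_sum_range' r n hdeg]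
    rw [Fin.sum_univ_eq_sum_range (fun i => C (r.coeff i) * X ^ i)]
    exact Finset.sum_congr rfl fun i _ => Polynomial.C_mul_X_pow_eq_monomial
  rw [hrtoPoly]
  have : r - p = -(g * (p /ₘ g)) := by
    rw [hrdef, Polynomial.modByMonic_eq_sub_mul_div p g]; ring
  rw [Ideal.Quotient.mk_eq_mk_iff_sub_mem, this]
  exact neg_mem (Ideal.mem_span_singleton.mpr (dvd_mul_right _ _))

end

end St19

/-- If `C` is a free cyclic code of odd length `n` over `R = ℤ₄[u]/(u²)` with
idempotent generator `e(x)`, then `1 - e(x⁻¹)` (where `x⁻¹ = x^{n-1}` modulo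
`xⁿ - 1`) is an idempotent generator of the dual code `C^⊥`. -/
theorem stmt19 (n : ℕ) [NeZero n] (hodd : Odd n) (e : Polynomial R4)
    (hidem : (Ideal.Quotient.mk (Ideal.span {(X : Polynomial R4) ^ n - 1}) e) ^ 2 =
      Ideal.Quotient.mk (Ideal.span {(X : Polynomial R4) ^ n - 1}) e)
    (hfree : Module.Free R4
      (Ideal.span {Ideal.Quotient.mk (Ideal.span {(X : Polynomial R4) ^ n - 1}) e})) :
    ((1 : Polynomial R4 ⧸ Ideal.span {(X : Polynomial R4) ^ n - 1}) -
        Ideal.Quotient.mk (Ideal.span {(X : Polynomial R4) ^ n - 1}) (e.comp (X ^ (n - 1)))) ^ 2 =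
      (1 : Polynomial R4 ⧸ Ideal.span {(X : Polynomial R4) ^ n - 1}) -
        Ideal.Quotient.mk (Ideal.span {(X : Polynomial R4) ^ n - 1}) (e.comp (X ^ (n - 1))) ∧
    codeOfIdeal (Ideal.span
        {(1 : Polynomial R4 ⧸ Ideal.span {(X : Polynomial R4) ^ n - 1}) -
          Ideal.Quotient.mk (Ideal.span {(X : Polynomial R4) ^ n - 1}) (e.comp (X ^ (n - 1)))}) =
      dualCode (codeOfIdeal (Ideal.span
        {Ideal.Quotient.mk (Ideal.span {(X : Polynomial R4) ^ n - 1}) e})) := by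
  classical
  have hE2 : St19.qk n e * St19.qk n e = St19.qk n e := by
    have h := hidem; rw [pow_two] at h; exact h
  have hSmk : Ideal.Quotient.mk (Ideal.span {(X : Polynomial R4) ^ n - 1})
      (e.comp ((X : Polynomial R4) ^ (n - 1))) = St19.sig n (St19.qk n e) :=
    (St19.sig_mk n e).symm
  rw [hSmk]
  set S := St19.sig n (St19.qk n e) with hSdef
  have hS2 : S * S = S := by rw [hSdef, ← map_mul, hE2]
  have hFidem : (1 - S) * (1 - S) = 1 - S := by
    have h : (1 - S) * (1 - S) = 1 - 2 * S + S * S := by ring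
    rw [h, hS2]; ring
  constructor
  · have h : (1 - S) ^ 2 = 1 - 2 * S + S * S := by ring
    rw [h, hS2]; ring
  · ext y
    simp only [codeOfIdeal, dualCode, Set.mem_setOf_eq]
    constructor
    · intro hy c hc
      have hFy := (St19.mem_span_idem n hFidem).mp hy
      have h1 : S * St19.qk n (toPoly y) = 0 := by
        have h : St19.qk n (toPoly y) - S * St19.qk n (toPoly y) = St19.qk n (toPoly y) := by
          nth_rewrite 3 [← hFy]
          ring
        exact sub_eq_self.mp h
      have h2 : St19.qk n e * St19.sig n (St19.qk n (toPoly y)) = 0 := by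
        have h := congrArg (St19.sig n) h1
        rw [map_mul, map_zero, hSdef, St19.sig_sig n e] at h
        exact h
      have h3 := (St19.mem_span_idem n hE2).mp hc
      have h4 : St19.qk n (toPoly c) * St19.sig n (St19.qk n (toPoly y)) = 0 := by
        calc St19.qk n (toPoly c) * St19.sig n (St19.qk n (toPoly y))
            = (St19.qk n e * St19.qk n (toPoly c)) * St19.sig n (St19.qk n (toPoly y)) := by
              rw [h3]
          _ = St19.qk n (toPoly c) * (St19.qk n e * St19.sig n (St19.qk n (toPoly y))) := by
              ring
          _ = 0 := by rw [h2, mul_zero]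
      rw [← St19.tau_pair n c y, h4, map_zero]
    · intro H
      rw [St19.mem_span_idem n hFidem]
      have h0 : St19.qk n e * St19.sig n (St19.qk n (toPoly y)) = 0 := by
        apply St19.eq_zero_of_tau
        intro k
        obtain ⟨c, hc⟩ := St19.exists_word n ((St19.t n) ^ k * St19.qk n e)
        have hcC : St19.qk n (toPoly c) ∈ Ideal.span {St19.qk n e} := by
          rw [hc]
          exact Ideal.mem_span_singleton.mpr ⟨(St19.t n) ^ k, mul_comm _ _⟩
        have hHc := H c hcC
        calc St19.tau n ((St19.t n) ^ k * (St19.qk n e * St19.sig n (St19.qk n (toPoly y))))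
            = St19.tau n (St19.qk n (toPoly c) * St19.sig n (St19.qk n (toPoly y))) := by
              rw [← mul_assoc, ← hc]
          _ = ∑ i : Fin n, c i * y i := St19.tau_pair n c y
          _ = 0 := hHc
      have h1 : S * St19.qk n (toPoly y) = 0 := by
        have h := congrArg (St19.sig n) h0
        rw [map_mul, map_zero, St19.sig_sig n (toPoly y)] at h
        exact h
      rw [sub_mul, one_mul, h1, sub_zero]
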